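/- Let A be a commutative ring, S a multiplicatively closed subset of A, and Q a strongly weakly S-primary ideal of A. If Q is not an S-primary ideal of A, then rad(Q) = rad(0), i.e., the radical of Q equals the nilradical of A. -/

import Mathlib

/-- `Q` is *`S`-primary*: there is `s ∈ S` such that `x*y ∈ Q` implies
`s*x ∈ Q` or `s*y ∈ rad(Q)`. -/
def SPrimary {A : Type*} [CommRing A] (S : Set A) (Q : Ideal A) : Prop :=
  ∃ s ∈ S, ∀ x y : A, x * y ∈ Q → s * x ∈ Q ∨ s * y ∈ Q.radical

/-- `Q` is *strongly weakly `S`-primary*: there is `s ∈ S` such that for all ideals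
`I`, `J`, if `I*J ⊆ Q` and `I*J ≠ 0` then `s*I ⊆ Q` or `s*J ⊆ rad(Q)`. -/
def StronglyWeaklySPrimary {A : Type*} [CommRing A] (S : Set A) (Q : Ideal A) : Prop :=
  ∃ s ∈ S, ∀ I J : Ideal A, I * J ≤ Q → I * J ≠ ⊥ →
    (∀ x ∈ I, s * x ∈ Q) ∨ (∀ y ∈ J, s * y ∈ Q.radical)

theorem radical_eq_nilradical_of_not_sPrimary {A : Type*} [CommRing A] (S : Set A)
    (hS : ∀ a ∈ S, ∀ b ∈ S, a * b ∈ S)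
    (Q : Ideal A) (hQS : (Q : Set A) ∩ S = ∅)
    (hQ : StronglyWeaklySPrimary S Q) (hnp : ¬ SPrimary S Q) :
    Q.radical = (⊥ : Ideal A).radical := by
  obtain ⟨s, hsS, hstr⟩ := hQ
  rw [SPrimary] at hnp
  push_neg at hnp
  obtain ⟨x, y, hxy, h1, h2⟩ := hnp s hsS
  set I : Ideal A := Ideal.span {x} ⊔ Q with hI
  set J : Ideal A := Ideal.span {y} ⊔ Q with hJ
  have hIJ : I * J ≤ Q := by
    rw [hI, hJ, Ideal.sup_mul, Ideal.mul_sup, Ideal.mul_sup]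
    refine sup_le (sup_le ?_ Ideal.mul_le_right) (sup_le Ideal.mul_le_left Ideal.mul_le_right)
    rw [Ideal.span_singleton_mul_span_singleton]
    exact Ideal.span_le.2 (by simpa using hxy)
  have hbot : I * J = ⊥ := by
    by_contra hne
    rcases hstr I J hIJ hne with h | h
    · exact h1 (h x (le_sup_left (a := Ideal.span {x})
        (Ideal.subset_span (Set.mem_singleton x))))
    · exact h2 (h y (le_sup_left (a := Ideal.span {y})
        (Ideal.subset_span (Set.mem_singleton y))))
  have hQ2 : Q * Q = ⊥ := by
    refine le_bot_iff.1 ?_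
    calc Q * Q ≤ I * J := Ideal.mul_mono le_sup_right le_sup_right
    _ = ⊥ := hbot
  have hQrad : Q ≤ (⊥ : Ideal A).radical := by
    intro q hq
    refine ⟨2, ?_⟩
    have : q * q ∈ Q * Q := Ideal.mul_mem_mul hq hq
    rw [hQ2] at this
    simpa [sq] using this
  refine le_antisymm ?_ (Ideal.radical_mono bot_le)
  calc Q.radical ≤ ((⊥ : Ideal A).radical).radical := Ideal.radical_mono hQrad
  _ = (⊥ : Ideal A).radical := Ideal.radical_idem _
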